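/- Let C(q,t) be the (q,t)-deformed Cartan matrix of a finite type g, C_t(t) = C(1,t) its specialization at q = 1, D = diag(d_i) the symmetrizing diagonal matrix, and B(t) = C_t(t) D⁻¹. Write the inverse B̃(t) = B(t)⁻¹ over ℚ(t), with Laurent expansion B̃_{i,j}(t) = Σ_u b̃_{i,j}(u) t^u at t = 0. Then b̃_{i,j}(u) = 0 for all u ≤ 0, and b̃_{i,j}(1) = d_i δ_{i,j}. -/

import Mathlib

/-- Let `C` be a finite-type Cartan matrix with symmetrizer `D = diag(dᵢ)`, and let
`B̃(t) = (C_t(t) D⁻¹)⁻¹` where `C_t(t) = C(1,t)` is the `t`-quantized Cartan matrix.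
The Laurent expansion coefficients `b̃ᵢⱼ(u)` of `B̃ᵢⱼ(t)` at `t = 0` (characterized by the
two-sided convolution identities below together with boundedness of the support from
below) satisfy `b̃ᵢⱼ(u) = 0` for `u ≤ 0` and `b̃ᵢⱼ(1) = dᵢ δᵢⱼ`. -/
theorem stmt11 {ι : Type*} [Fintype ι] [DecidableEq ι] [Nonempty ι]
    (c : ι → ι → ℤ) (d : ι → ℚ)
    (hdiag : ∀ i, c i i = 2)
    (hoffd : ∀ i j, i ≠ j → c i j ≤ 0)
    (hzsym : ∀ i j, c i j = 0 ↔ c j i = 0)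
    (hd : ∀ i, 0 < d i)
    (hdc : ∀ i j, d i * (c i j : ℚ) = d j * (c j i : ℚ))
    (hpos : Matrix.PosDef (Matrix.of fun i j => ((d i : ℝ) * (c i j : ℝ))))
    (b : ι → ι → ℤ → ℚ)
    (hlow : ∃ N : ℤ, ∀ i j u, u < N → b i j u = 0)
    (hBinv : ∀ i k : ι, ∀ u : ℤ,
      (b i k (u - 1) + b i k (u + 1)) / d i +
        ∑ j ∈ Finset.univ.erase i, ((c i j : ℚ) / d j) * b j k u =
      if i = k ∧ u = 0 then 1 else 0)
    (hinvB : ∀ i k : ι, ∀ u : ℤ,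
      (b i k (u - 1) + b i k (u + 1)) / d k +
        ∑ j ∈ Finset.univ.erase k, b i j u * ((c j k : ℚ) / d k) =
      if i = k ∧ u = 0 then 1 else 0) :
    (∀ i j : ι, ∀ u : ℤ, u ≤ 0 → b i j u = 0) ∧
    (∀ i j : ι, b i j 1 = if i = j then d i else 0) := by
  obtain ⟨N, hN⟩ := hlow
  have key : ∀ n : ℕ, ∀ i k : ι, ∀ u : ℤ, u ≤ 0 → u < N + n → b i k u = 0 := by
    intro n
    induction n with
    | zero => intro i k u hu0 hun; exact hN i k u (by omega)
    | succ n ih =>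
      intro i k u hu0 hun
      rcases lt_or_ge u (N + n) with h | h
      · exact ih i k u hu0 h
      have heq := hBinv i k (u - 1)
      have hif : (if i = k ∧ (u:ℤ) - 1 = 0 then (1:ℚ) else 0) = 0 := by
        rw [if_neg]; rintro ⟨_, h'⟩; omega
      rw [hif] at heq
      have h1 : b i k (u - 1 - 1) = 0 := ih i k _ (by omega) (by omega)
      have hsum : ∑ j ∈ Finset.univ.erase i, ((c i j : ℚ) / d j) * b j k (u - 1) = 0 := by
        apply Finset.sum_eq_zero; intro j _
        rw [ih j k _ (by omega) (by omega)]; ring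
      rw [h1, hsum] at heq
      have hdi : d i ≠ 0 := (hd i).ne'
      field_simp at heq
      simpa using heq
  have hzero : ∀ i j : ι, ∀ u : ℤ, u ≤ 0 → b i j u = 0 := by
    intro i j u hu
    exact key (u - N + 1).toNat i j u hu (by omega)
  refine ⟨hzero, ?_⟩
  intro i k
  have heq := hBinv i k 0
  have h1 : b i k (0 - 1) = 0 := hzero i k _ (by omega)
  have hsum : ∑ j ∈ Finset.univ.erase i, ((c i j : ℚ) / d j) * b j k 0 = 0 := by
    apply Finset.sum_eq_zero; intro j _
    rw [hzero j k 0 le_rfl]; ring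
  rw [h1, hsum] at heq
  have hdi : d i ≠ 0 := (hd i).ne'
  by_cases hik : i = k
  · subst hik
    simp only [and_self, if_true] at heq
    rw [if_pos rfl]
    field_simp at heq
    norm_num at heq
    linarith
  · rw [if_neg (by tauto)] at heq
    rw [if_neg hik]
    field_simp at heq
    norm_num at heq
    linarith
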